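/- Let ω be irrational with convergent denominators (q_j), and let U = {q_j : q_{j+1} ≥ (q_j+1)²}. Suppose limsup_{n→∞} (∑_{j=0}^{k(n)} (log q_{j+1})/q_j − (log M_n)/n) = +∞ where inf_n (1/n) log M_n = c > −∞ and k(n) is defined by q_{k(n)} ≤ n < q_{k(n)+1}. Then limsup_{n→∞} (∑_{j ≤ k(n), q_j ∈ U} (log q_{j+1})/q_j − (log M_n)/n) = +∞; in particular U is nonempty (indeed infinite). -/

import Mathlib

open Finset Filter


/-- The iterated fractional parts of the Gauss continued fraction algorithm:
`gaussIter ω n = ω_n`. -/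
noncomputable def gaussIter (ω : ℝ) : ℕ → ℝ
  | 0 => Int.fract ω
  | n + 1 => Int.fract (gaussIter ω n)⁻¹

/-- The partial quotients of the Gauss continued fraction algorithm:
`cfA ω 0 = a₀ = ⌊ω⌋`, `cfA ω (n+1) = a_{n+1} = ⌊1/ω_n⌋`. -/
noncomputable def cfA (ω : ℝ) : ℕ → ℤ
  | 0 => ⌊ω⌋
  | n + 1 => ⌊(gaussIter ω n)⁻¹⌋

/-- Denominators of the convergents: `q₋₂ = 1`, `q₋₁ = 0`, `q_n = a_n q_{n-1} + q_{n-2}`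
(so `q₀ = 1`, `q₁ = a₁`). They are positive integers. -/
noncomputable def qden (ω : ℝ) : ℕ → ℕ
  | 0 => 1
  | 1 => (cfA ω 1).toNat
  | n + 2 => (cfA ω (n + 2)).toNat * qden ω (n + 1) + qden ω n

/-- Numerators of the convergents: `p₋₂ = 0`, `p₋₁ = 1`, `p_n = a_n p_{n-1} + p_{n-2}`
(so `p₀ = a₀`, `p₁ = a₁ a₀ + 1`). -/
noncomputable def pnum (ω : ℝ) : ℕ → ℤ
  | 0 => cfA ω 0
  | 1 => cfA ω 1 * cfA ω 0 + 1
  | n + 2 => cfA ω (n + 2) * pnum ω (n + 1) + pnum ω n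

/-- The denominators viewed as real numbers. -/
noncomputable def qr (ω : ℝ) (n : ℕ) : ℝ := (qden ω n : ℝ)

/- ### Auxiliary lemmas -/

lemma stmt16_fract_irr {x : ℝ} (h : Irrational x) : Irrational (Int.fract x) := by
  rw [Int.fract]
  exact h.sub_intCast _

lemma stmt16_gauss_irr {ω : ℝ} (hω : Irrational ω) : ∀ n, Irrational (gaussIter ω n)
  | 0 => stmt16_fract_irr hω
  | n + 1 => stmt16_fract_irr (stmt16_gauss_irr hω n).inv

lemma stmt16_gauss_mem {ω : ℝ} (hω : Irrational ω) (n : ℕ) :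
    0 < gaussIter ω n ∧ gaussIter ω n < 1 := by
  have hirr := stmt16_gauss_irr hω n
  have hne : gaussIter ω n ≠ 0 := by
    intro h0
    exact hirr.ne_rat 0 (by simp [h0])
  cases n with
  | zero => exact ⟨lt_of_le_of_ne (Int.fract_nonneg ω) (Ne.symm hne), Int.fract_lt_one ω⟩
  | succ m => exact ⟨lt_of_le_of_ne (Int.fract_nonneg _) (Ne.symm hne), Int.fract_lt_one _⟩

lemma stmt16_cfA_pos {ω : ℝ} (hω : Irrational ω) (n : ℕ) : 1 ≤ cfA ω (n + 1) := by
  obtain ⟨h0, h1⟩ := stmt16_gauss_mem hω n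
  have : (1 : ℝ) ≤ (gaussIter ω n)⁻¹ := by
    rw [le_inv_comm₀ one_pos h0]
    simpa using h1.le
  exact Int.le_floor.2 (by exact_mod_cast this)

lemma stmt16_cfA_toNat_pos {ω : ℝ} (hω : Irrational ω) (n : ℕ) :
    1 ≤ (cfA ω (n + 1)).toNat := by
  have := stmt16_cfA_pos hω n
  omega

lemma stmt16_qden_pos {ω : ℝ} (hω : Irrational ω) : ∀ n, 1 ≤ qden ω n
  | 0 => le_refl 1
  | 1 => stmt16_cfA_toNat_pos hω 0
  | n + 2 => le_trans (stmt16_qden_pos hω n) (by rw [qden]; omega)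

lemma stmt16_qden_mono {ω : ℝ} (hω : Irrational ω) (n : ℕ) : qden ω n ≤ qden ω (n + 1) := by
  cases n with
  | zero => exact stmt16_qden_pos hω 1
  | succ m =>
      show qden ω (m + 1) ≤ qden ω (m + 2)
      rw [qden]
      have := stmt16_cfA_toNat_pos hω (m + 1)
      nlinarith [stmt16_qden_pos hω m, stmt16_qden_pos hω (m + 1)]

lemma stmt16_qden_two {ω : ℝ} (hω : Irrational ω) (n : ℕ) :
    2 * qden ω n ≤ qden ω (n + 2) := by
  show 2 * qden ω n ≤ qden ω (n + 2)
  rw [qden]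
  have h1 := stmt16_cfA_toNat_pos hω (n + 1)
  have h2 := stmt16_qden_mono hω n
  nlinarith [stmt16_qden_pos hω n]

lemma stmt16_qden_ge_pow {ω : ℝ} (hω : Irrational ω) : ∀ n, 2 ^ (n / 2) ≤ qden ω n
  | 0 => le_refl 1
  | 1 => stmt16_qden_pos hω 1
  | n + 2 => by
      have h1 := stmt16_qden_ge_pow hω n
      have h2 := stmt16_qden_two hω n
      have : (n + 2) / 2 = n / 2 + 1 := by omega
      rw [this, pow_succ]
      omega

/-- `s = 2^{1/4}`, the base of our geometric comparison. -/
noncomputable def stmt16s : ℝ := Real.sqrt (Real.sqrt 2)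

lemma stmt16s_pos : 0 < stmt16s := Real.sqrt_pos.2 (Real.sqrt_pos.2 two_pos)

lemma one_lt_stmt16s : 1 < stmt16s := by
  have h2 : 1 < Real.sqrt 2 := by
    rw [show (1:ℝ) = Real.sqrt 1 by simp]
    exact Real.sqrt_lt_sqrt (by norm_num) (by norm_num)
  calc 1 = Real.sqrt 1 := by simp
  _ < stmt16s := Real.sqrt_lt_sqrt (by norm_num) h2

lemma stmt16s_pow_four : stmt16s ^ 4 = 2 := by
  have h1 : stmt16s ^ 2 = Real.sqrt 2 := Real.sq_sqrt (Real.sqrt_nonneg 2)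
  have h : stmt16s ^ 4 = (stmt16s ^ 2) ^ 2 := by ring
  rw [h, h1, Real.sq_sqrt (by norm_num : (0:ℝ) ≤ 2)]

lemma stmt16_geom_bd (m : ℕ) : ∑ j ∈ range m, (stmt16s⁻¹) ^ j ≤ (1 - stmt16s⁻¹)⁻¹ := by
  have h0 : (0:ℝ) ≤ stmt16s⁻¹ := (inv_nonneg).2 stmt16s_pos.le
  have h1 : stmt16s⁻¹ < 1 := inv_lt_one_of_one_lt₀ one_lt_stmt16s
  have := Summable.sum_le_tsum (range m) (fun i _ => pow_nonneg h0 i)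
    (summable_geometric_of_lt_one h0 h1)
  rwa [tsum_geometric_of_lt_one h0 h1] at this

lemma stmt16_log_le_two_sqrt {x : ℝ} (hx : 0 < x) : Real.log x ≤ 2 * Real.sqrt x := by
  have h1 : Real.log (Real.sqrt x) ≤ Real.sqrt x - 1 :=
    Real.log_le_sub_one_of_pos (Real.sqrt_pos.2 hx)
  have h2 : Real.log (Real.sqrt x) = Real.log x / 2 := Real.log_sqrt hx.le
  nlinarith [Real.sqrt_nonneg x]

lemma stmt16_qr_one_le {ω : ℝ} (hω : Irrational ω) (n : ℕ) : 1 ≤ qr ω n := by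
  have := stmt16_qden_pos hω n
  simp only [qr]
  exact_mod_cast this

lemma stmt16_term_nonneg {ω : ℝ} (hω : Irrational ω) (j : ℕ) :
    0 ≤ Real.log (qr ω (j + 1)) / qr ω j :=
  div_nonneg (Real.log_nonneg (stmt16_qr_one_le hω (j + 1)))
    (le_trans zero_le_one (stmt16_qr_one_le hω j))

lemma stmt16_sqrt_key {ω : ℝ} (hω : Irrational ω) (j : ℕ) :
    stmt16s ^ j ≤ stmt16s * Real.sqrt (qr ω j) := by
  have hq0 : (0:ℝ) ≤ qr ω j := le_trans zero_le_one (stmt16_qr_one_le hω j)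
  have h1 : (stmt16s ^ (2 * (j / 2))) ^ 2 ≤ qr ω j := by
    have he : (stmt16s ^ (2 * (j / 2))) ^ 2 = 2 ^ (j / 2) := by
      rw [← pow_mul, show 2 * (j / 2) * 2 = 4 * (j / 2) by ring, pow_mul, stmt16s_pow_four]
    rw [he]
    have := stmt16_qden_ge_pow hω j
    simp only [qr]
    exact_mod_cast this
  have h2 : stmt16s ^ (2 * (j / 2)) ≤ Real.sqrt (qr ω j) :=
    (Real.le_sqrt (pow_nonneg stmt16s_pos.le _) hq0).2 h1
  calc stmt16s ^ j ≤ stmt16s ^ (2 * (j / 2) + 1) :=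
        pow_le_pow_right₀ one_lt_stmt16s.le (by omega)
  _ = stmt16s * stmt16s ^ (2 * (j / 2)) := by ring
  _ ≤ stmt16s * Real.sqrt (qr ω j) := by nlinarith [stmt16s_pos]

lemma stmt16_term_bound {ω : ℝ} (hω : Irrational ω) (j : ℕ)
    (h : ¬ ((qden ω j + 1) ^ 2 ≤ qden ω (j + 1))) :
    Real.log (qr ω (j + 1)) / qr ω j ≤ (4 * Real.sqrt 2 * stmt16s) * (stmt16s⁻¹) ^ j := by
  set a := qr ω j with ha_def
  set b := qr ω (j + 1) with hb_def
  have ha : 1 ≤ a := stmt16_qr_one_le hω j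
  have hb : 1 ≤ b := stmt16_qr_one_le hω (j + 1)
  have hba : b ≤ (a + 1) ^ 2 := by
    have hn : qden ω (j + 1) ≤ (qden ω j + 1) ^ 2 := by omega
    have : (qden ω (j + 1) : ℝ) ≤ ((qden ω j + 1 : ℕ) : ℝ) ^ 2 := by exact_mod_cast hn
    simpa [qr, a, b] using this
  have hsa : 0 < Real.sqrt a := Real.sqrt_pos.2 (by linarith)
  have hlog : Real.log b ≤ 4 * Real.sqrt 2 * Real.sqrt a := by
    have h1 : Real.log b ≤ Real.log ((a + 1) ^ 2) :=
      Real.log_le_log (by linarith) hba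
    have h2 : Real.log ((a + 1) ^ 2) = 2 * Real.log (a + 1) := by
      rw [Real.log_pow]; norm_num
    have h3 : Real.log (a + 1) ≤ 2 * Real.sqrt (a + 1) := stmt16_log_le_two_sqrt (by linarith)
    have h4 : Real.sqrt (a + 1) ≤ Real.sqrt (2 * a) :=
      Real.sqrt_le_sqrt (by linarith)
    have h5 : Real.sqrt (2 * a) = Real.sqrt 2 * Real.sqrt a :=
      Real.sqrt_mul (by norm_num) a
    nlinarith [Real.sqrt_nonneg (a + 1)]
  have hstep1 : Real.log b / a ≤ 4 * Real.sqrt 2 / Real.sqrt a := by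
    have haa : a = Real.sqrt a * Real.sqrt a := (Real.mul_self_sqrt (by linarith)).symm
    rw [div_le_div_iff₀ (by linarith) hsa]
    calc Real.log b * Real.sqrt a ≤ (4 * Real.sqrt 2 * Real.sqrt a) * Real.sqrt a := by
          nlinarith [Real.log_nonneg hb]
    _ = 4 * Real.sqrt 2 * a := by linear_combination (-4 * Real.sqrt 2) * haa
  have hkey := stmt16_sqrt_key hω j
  have hspos : (0:ℝ) < stmt16s ^ j := pow_pos stmt16s_pos j
  have hstep2 : 4 * Real.sqrt 2 / Real.sqrt a ≤
      (4 * Real.sqrt 2 * stmt16s) * (stmt16s⁻¹) ^ j := by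
    rw [inv_pow]
    have h7 : (stmt16s * Real.sqrt a)⁻¹ ≤ (stmt16s ^ j)⁻¹ := by
      apply inv_anti₀ hspos
      exact hkey
    have h8 : (4 * Real.sqrt 2 * stmt16s) * (stmt16s * Real.sqrt a)⁻¹ ≤
        (4 * Real.sqrt 2 * stmt16s) * (stmt16s ^ j)⁻¹ := by
      apply mul_le_mul_of_nonneg_left h7
      have := Real.sqrt_nonneg 2
      nlinarith [stmt16s_pos]
    have h9 : (4 * Real.sqrt 2 * stmt16s) * (stmt16s * Real.sqrt a)⁻¹ =
        4 * Real.sqrt 2 / Real.sqrt a := by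
      have hs0 : stmt16s ≠ 0 := stmt16s_pos.ne'
      have hsa0 : Real.sqrt a ≠ 0 := hsa.ne'
      field_simp
    linarith
  linarith

/-- The uniform bound on the sum over indices outside `U`. -/
lemma stmt16_compl_bound {ω : ℝ} (hω : Irrational ω) (m : ℕ) :
    ∑ j ∈ (Finset.range m).filter (fun j => ¬ ((qden ω j + 1) ^ 2 ≤ qden ω (j + 1))),
      Real.log (qr ω (j + 1)) / qr ω j
    ≤ 4 * Real.sqrt 2 * stmt16s * (1 - stmt16s⁻¹)⁻¹ := by
  have hC : (0:ℝ) ≤ 4 * Real.sqrt 2 * stmt16s := by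
    have := Real.sqrt_nonneg 2
    nlinarith [stmt16s_pos]
  have hinv : (0:ℝ) ≤ stmt16s⁻¹ := (inv_nonneg).2 stmt16s_pos.le
  calc ∑ j ∈ (Finset.range m).filter (fun j => ¬ ((qden ω j + 1) ^ 2 ≤ qden ω (j + 1))),
        Real.log (qr ω (j + 1)) / qr ω j
      ≤ ∑ j ∈ (Finset.range m).filter (fun j => ¬ ((qden ω j + 1) ^ 2 ≤ qden ω (j + 1))),
        (4 * Real.sqrt 2 * stmt16s) * (stmt16s⁻¹) ^ j := by
        apply Finset.sum_le_sum
        intro j hj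
        exact stmt16_term_bound hω j (Finset.mem_filter.1 hj).2
  _ ≤ ∑ j ∈ Finset.range m, (4 * Real.sqrt 2 * stmt16s) * (stmt16s⁻¹) ^ j := by
        apply Finset.sum_le_sum_of_subset_of_nonneg (Finset.filter_subset _ _)
        intro j _ _
        exact mul_nonneg hC (pow_nonneg hinv j)
  _ = (4 * Real.sqrt 2 * stmt16s) * ∑ j ∈ Finset.range m, (stmt16s⁻¹) ^ j := by
        rw [Finset.mul_sum]
  _ ≤ 4 * Real.sqrt 2 * stmt16s * (1 - stmt16s⁻¹)⁻¹ :=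
        mul_le_mul_of_nonneg_left (stmt16_geom_bd m) hC

/-- if `limsup (∑_{j=0}^{k(n)} log q_{j+1}/q_j - (log M_n)/n) = +∞` and
`inf_n (log M_n)/n = c > -∞`, then already the sum restricted to the indices `j` with
`q_j ∈ U = {q_j : q_{j+1} ≥ (q_j+1)²}` has `limsup = +∞`; in particular `U` is
infinite (hence nonempty).  (`limsup = +∞` is expressed as: every real bound is
exceeded frequently.) -/
theorem stmt16 (ω : ℝ) (hω : Irrational ω)
    (M : ℕ → ℝ) (hMpos : ∀ n : ℕ, 1 ≤ n → 0 < M n)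
    (c : ℝ) (hc : ∀ n : ℕ, 1 ≤ n → c ≤ Real.log (M n) / n)
    (k : ℕ → ℕ) (hk : ∀ n : ℕ, 1 ≤ n → qden ω (k n) ≤ n ∧ n < qden ω (k n + 1))
    (hlim : ∀ A : ℝ, ∃ᶠ n in atTop,
      A ≤ (∑ j ∈ Finset.range (k n + 1), Real.log (qr ω (j + 1)) / qr ω j)
            - Real.log (M n) / n) :
    (∀ A : ℝ, ∃ᶠ n in atTop,
      A ≤ (∑ j ∈ (Finset.range (k n + 1)).filter
              (fun j => (qden ω j + 1) ^ 2 ≤ qden ω (j + 1)),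
            Real.log (qr ω (j + 1)) / qr ω j)
            - Real.log (M n) / n) ∧
    {l : ℕ | (qden ω l + 1) ^ 2 ≤ qden ω (l + 1)}.Infinite := by
  set B : ℝ := 4 * Real.sqrt 2 * stmt16s * (1 - stmt16s⁻¹)⁻¹ with hB_def
  have hmain : ∀ A : ℝ, ∃ᶠ n in atTop,
      A ≤ (∑ j ∈ (Finset.range (k n + 1)).filter
              (fun j => (qden ω j + 1) ^ 2 ≤ qden ω (j + 1)),
            Real.log (qr ω (j + 1)) / qr ω j)
            - Real.log (M n) / n := by
    intro A
    refine (hlim (A + B)).mono (fun n hn => ?_)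
    have hsplit := Finset.sum_filter_add_sum_filter_not (Finset.range (k n + 1))
      (fun j => (qden ω j + 1) ^ 2 ≤ qden ω (j + 1))
      (fun j => Real.log (qr ω (j + 1)) / qr ω j)
    have hcb := stmt16_compl_bound hω (k n + 1)
    rw [← hB_def] at hcb
    linarith
  refine ⟨hmain, ?_⟩
  by_contra hfin
  rw [Set.not_infinite] at hfin
  set T : ℝ := ∑ l ∈ hfin.toFinset, Real.log (qr ω (l + 1)) / qr ω l with hT_def
  obtain ⟨n, hn1, hn2⟩ := ((hmain (T - c + 1)).and_eventually (eventually_ge_atTop 1)).exists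
  have hsub : (Finset.range (k n + 1)).filter
      (fun j => (qden ω j + 1) ^ 2 ≤ qden ω (j + 1)) ⊆ hfin.toFinset := by
    intro j hj
    exact hfin.mem_toFinset.2 (Finset.mem_filter.1 hj).2
  have hle : (∑ j ∈ (Finset.range (k n + 1)).filter
      (fun j => (qden ω j + 1) ^ 2 ≤ qden ω (j + 1)),
        Real.log (qr ω (j + 1)) / qr ω j) ≤ T :=
    Finset.sum_le_sum_of_subset_of_nonneg hsub (fun j _ _ => stmt16_term_nonneg hω j)
  have hcn := hc n hn2
  linarith
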